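/- Let T ∈ G be hyperbolic with light-like eigenvectors v₁ = (y₁,1) and v₂ = (y₂,1), and let M = span{v₁, v₂}. Then every S ∈ G with S ∘ T = T ∘ S satisfies: S(ℂ·v₁) = ℂ·v₁, S(ℂ·v₂) = ℂ·v₂, S(M^†) = M^†, the scalars α, β with S(v₁) = α·v₁ and S(v₂) = β·v₂ satisfy α·conj(β) = 1, and S restricted to M^† is a bijective A-preserving operator of M^† (a unitary of the Hilbert space (M^†, A)) commuting with T|_{M^†}. Conversely, for every α ∈ ℂ with α ≠ 0 and every bounded bijective A-preserving operator V of M^† commuting with T|_{M^†}, the linear map S defined by S(v₁) = α·v₁, S(v₂) = (1/conj(α))·v₂ and S = V on M^† belongs to G and commutes with T. -/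

import Mathlib

noncomputable section

variable {H : Type*} [NormedAddCommGroup H] [InnerProductSpace ℂ H] [CompleteSpace H]

/-- The Hermitian form `A((x,z),(y,w)) = ⟨x,y⟩ - z·conj w` on `H ⊕ ℂ`, linear in the
first argument (the paper's convention); `⟨x,y⟩` (linear in `x`) is `inner y x` in Mathlib. -/
def formA (u v : H × ℂ) : ℂ :=
  (inner ℂ v.1 u.1 : ℂ) - u.2 * (starRingEnd ℂ) v.2

/-- The standard inner product of the Hilbert space `H ⊕ ℂ`, linear in the first argument. -/
def ipStd (u v : H × ℂ) : ℂ :=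
  (inner ℂ v.1 u.1 : ℂ) + u.2 * (starRingEnd ℂ) v.2

/-- Membership in the group `G` of bounded bijective linear maps preserving `A`. -/
def memG (T : (H × ℂ) →L[ℂ] (H × ℂ)) : Prop :=
  Function.Bijective T ∧ ∀ u v : H × ℂ, formA (T u) (T v) = formA u v

/-- `T` is elliptic: it has an eigenvector `(x,1)` with `‖x‖ < 1`. -/
def IsEllipticG (T : (H × ℂ) →L[ℂ] (H × ℂ)) : Prop :=
  ∃ x : H, ‖x‖ < 1 ∧ ∃ μ : ℂ, T (x, 1) = μ • ((x, 1) : H × ℂ)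

/-- Points `x` of the closed unit ball with `(x,1)` an eigenvector of `T`. -/
def fixedBall (T : (H × ℂ) →L[ℂ] (H × ℂ)) : Set H :=
  {x : H | ‖x‖ ≤ 1 ∧ ∃ μ : ℂ, T (x, 1) = μ • ((x, 1) : H × ℂ)}

/-- `T` is hyperbolic: not elliptic, with exactly two fixed points in the closed ball. -/
def IsHyperbolicG (T : (H × ℂ) →L[ℂ] (H × ℂ)) : Prop :=
  ¬ IsEllipticG T ∧ ∃ x y : H, x ≠ y ∧ fixedBall T = {x, y}

/-- `T` is parabolic: not elliptic, with exactly one fixed point in the closed ball. -/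
def IsParabolicG (T : (H × ℂ) →L[ℂ] (H × ℂ)) : Prop :=
  ¬ IsEllipticG T ∧ ∃ x : H, fixedBall T = {x}

/-- `M†`, the `A`-orthogonal complement of a subspace `M` of `H ⊕ ℂ`. -/
def daggerA (M : Submodule ℂ (H × ℂ)) : Submodule ℂ (H × ℂ) where
  carrier := {v | ∀ m ∈ M, formA v m = 0}
  add_mem' := by
    intro a b ha hb m hm
    have h1 := ha m hm
    have h2 := hb m hm
    simp only [formA, Prod.fst_add, Prod.snd_add, inner_add_right, add_mul] at *
    linear_combination h1 + h2
  zero_mem' := by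
    intro m hm
    simp [formA]
  smul_mem' := by
    intro c a ha m hm
    have h1 := ha m hm
    simp only [formA, Prod.smul_fst, Prod.smul_snd, inner_smul_right, smul_eq_mul] at *
    linear_combination c * h1

/-- The norm induced by `A` on a subspace where `A` is positive. -/
def nA (v : H × ℂ) : ℝ := Real.sqrt (formA v v).re

/-- Sequential completeness of a subspace for the norm induced by `A`. -/
def CompleteForA (M : Submodule ℂ (H × ℂ)) : Prop :=
  ∀ f : ℕ → H × ℂ, (∀ n, f n ∈ M) →
    (∀ ε : ℝ, 0 < ε → ∃ N : ℕ, ∀ m n : ℕ, N ≤ m → N ≤ n → nA (f m - f n) < ε) →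
    ∃ v ∈ M, ∀ ε : ℝ, 0 < ε → ∃ N : ℕ, ∀ n : ℕ, N ≤ n → nA (f n - v) < ε

end
section AuxLemmas
variable {H : Type*} [NormedAddCommGroup H] [InnerProductSpace ℂ H]

lemma formA_add_left (u u' v : H × ℂ) : formA (u + u') v = formA u v + formA u' v := by
  simp [formA, inner_add_right]; ring

lemma formA_add_right (u v v' : H × ℂ) : formA u (v + v') = formA u v + formA u v' := by
  simp [formA, inner_add_left]; ring

lemma formA_smul_left (p : ℂ) (u v : H × ℂ) : formA (p • u) v = p * formA u v := by
  simp [formA, inner_smul_right]; ring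

lemma formA_smul_right (q : ℂ) (u v : H × ℂ) :
    formA u (q • v) = (starRingEnd ℂ) q * formA u v := by
  simp [formA, inner_smul_left]; ring

lemma formA_conj (u v : H × ℂ) : formA u v = (starRingEnd ℂ) (formA v u) := by
  simp only [formA, map_sub, map_mul, inner_conj_symm, RingHomCompTriple.comp_apply,
    RingHom.id_apply, starRingEnd_self_apply]
  ring

lemma formA_sub_left (u u' v : H × ℂ) : formA (u - u') v = formA u v - formA u' v := by
  simp [formA, inner_sub_right]; ring

/-- `formA · m` as a continuous linear functional. -/
noncomputable def formACLM (m : H × ℂ) : (H × ℂ) →L[ℂ] ℂ :=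
  (innerSL ℂ m.1).comp (ContinuousLinearMap.fst ℂ H ℂ)
    - ((starRingEnd ℂ) m.2) • (ContinuousLinearMap.snd ℂ H ℂ)

lemma formACLM_apply (m v : H × ℂ) : formACLM m v = formA v m := by
  simp [formACLM, formA]; ring

lemma mem_daggerA_pair {a b : H × ℂ} {v : H × ℂ} :
    v ∈ daggerA (Submodule.span ℂ {a, b}) ↔ formA v a = 0 ∧ formA v b = 0 := by
  constructor
  · intro h
    exact ⟨h a (Submodule.subset_span (by simp)), h b (Submodule.subset_span (by simp))⟩
  · rintro ⟨h1, h2⟩ m hm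
    induction hm using Submodule.span_induction with
    | mem x hx => rcases hx with hx | hx <;> subst hx <;> assumption
    | zero => simp [formA]
    | add x y _ _ hx hy => rw [formA_add_right, hx, hy, add_zero]
    | smul c x _ hx => rw [formA_smul_right, hx, mul_zero]

lemma formA_expand (v₁ v₂ : H × ℂ) (hl₁ : formA v₁ v₁ = 0) (hl₂ : formA v₂ v₂ = 0)
    (p q p' q' : ℂ) (w w' : H × ℂ)
    (hw1 : formA w v₁ = 0) (hw2 : formA w v₂ = 0)
    (hw1' : formA w' v₁ = 0) (hw2' : formA w' v₂ = 0) :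
    formA (p • v₁ + q • v₂ + w) (p' • v₁ + q' • v₂ + w')
      = p * (starRingEnd ℂ) q' * formA v₁ v₂ + q * (starRingEnd ℂ) p' * formA v₂ v₁
        + formA w w' := by
  have h1 : formA v₁ w' = 0 := by rw [formA_conj, hw1', map_zero]
  have h2 : formA v₂ w' = 0 := by rw [formA_conj, hw2', map_zero]
  simp only [formA_add_left, formA_add_right, formA_smul_left, formA_smul_right,
    hl₁, hl₂, h1, h2, hw1, hw2]
  ring

end AuxLemmas

section
variable {H : Type*} [NormedAddCommGroup H] [InnerProductSpace ℂ H] [CompleteSpace H]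

set_option maxHeartbeats 2000000 in
/-- centralizer of a hyperbolic isometry: every commuting `S ∈ G`
preserves the two light-like eigenlines (with eigenvalues `α, β` satisfying
`α·conj β = 1`) and restricts to a unitary of `(M†, A)` commuting with `T|_{M†}`;
conversely every such pair of data yields a commuting element of `G`. -/
theorem centralizer_hyperbolic (T : (H × ℂ) →L[ℂ] (H × ℂ))
    (hT : memG T) (hhyp : IsHyperbolicG T)
    (y₁ y₂ : H) (hne : y₁ ≠ y₂)
    (hlight₁ : formA ((y₁, 1) : H × ℂ) ((y₁, 1) : H × ℂ) = 0)
    (hlight₂ : formA ((y₂, 1) : H × ℂ) ((y₂, 1) : H × ℂ) = 0)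
    (μ₁ μ₂ : ℂ)
    (heig₁ : T (y₁, 1) = μ₁ • ((y₁, 1) : H × ℂ))
    (heig₂ : T (y₂, 1) = μ₂ • ((y₂, 1) : H × ℂ))
    (M : Submodule ℂ (H × ℂ))
    (hM : M = Submodule.span ℂ {((y₁, 1) : H × ℂ), ((y₂, 1) : H × ℂ)}) :
    -- every S ∈ G commuting with T preserves the eigenlines and M†
    (∀ S : (H × ℂ) →L[ℂ] (H × ℂ), memG S → S ∘L T = T ∘L S →
      (∃ α β : ℂ,
        S (y₁, 1) = α • ((y₁, 1) : H × ℂ) ∧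
        S (y₂, 1) = β • ((y₂, 1) : H × ℂ) ∧
        α * (starRingEnd ℂ) β = 1) ∧
      S '' (daggerA M : Set (H × ℂ)) = (daggerA M : Set (H × ℂ)) ∧
      Set.BijOn S (daggerA M : Set (H × ℂ)) (daggerA M : Set (H × ℂ)) ∧
      (∀ u ∈ daggerA M, ∀ w ∈ daggerA M, formA (S u) (S w) = formA u w) ∧
      (∀ v ∈ daggerA M, S (T v) = T (S v))) ∧
    -- conversely, each α ≠ 0 and each A-preserving bijection V of M† commuting
    -- with T|_{M†} determine an element of G commuting with T
    (∀ (α : ℂ), α ≠ 0 → ∀ V : daggerA M →L[ℂ] daggerA M,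
      Function.Bijective V →
      (∀ u w : daggerA M,
        formA (V u : H × ℂ) (V w : H × ℂ) = formA (u : H × ℂ) (w : H × ℂ)) →
      (∀ u w : daggerA M, T (u : H × ℂ) = (w : H × ℂ) →
        T (V u : H × ℂ) = (V w : H × ℂ)) →
      ∃ S : (H × ℂ) →L[ℂ] (H × ℂ), memG S ∧ S ∘L T = T ∘L S ∧
        S (y₁, 1) = α • ((y₁, 1) : H × ℂ) ∧
        S (y₂, 1) = (1 / (starRingEnd ℂ) α) • ((y₂, 1) : H × ℂ) ∧
        ∀ w : daggerA M, S (w : H × ℂ) = (V w : H × ℂ)) := by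
  -- notation
  have hconj2 : ∀ z : ℂ, (z • ((y₂,1) : H × ℂ)).2 = z := fun z => by simp
  -- norms of the eigdirections
  have hnorm : ∀ y : H, formA ((y,1) : H × ℂ) ((y,1) : H × ℂ) = 0 → ‖y‖ = 1 := by
    intro y hy
    have h : (inner ℂ y y : ℂ) - 1 = 0 := by simpa [formA] using hy
    have h2 : (inner ℂ y y : ℂ) = 1 := by linear_combination h
    have h3 : ‖y‖^2 = 1 := by
      have := inner_self_eq_norm_sq (𝕜 := ℂ) y
      rw [h2] at this
      simpa using this.symm
    have h4 : (‖y‖ - 1) * (‖y‖ + 1) = 0 := by ring_nf; linarith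
    rcases mul_eq_zero.mp h4 with h5 | h5
    · linarith
    · have := norm_nonneg y; linarith
  have hn₁ : ‖y₁‖ = 1 := hnorm y₁ hlight₁
  have hn₂ : ‖y₂‖ = 1 := hnorm y₂ hlight₂
  -- the cross pairing is nonzero
  have hc : formA ((y₁,1) : H × ℂ) ((y₂,1) : H × ℂ) ≠ 0 := by
    intro h
    have h1 : (inner ℂ y₂ y₁ : ℂ) = 1 := by
      have := h; simp [formA] at this; linear_combination this
    exact hne (((inner_eq_one_iff_of_norm_eq_one hn₂ hn₁).mp h1)).symm
  -- the fixed ball is exactly {y₁, y₂}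
  have hfb : fixedBall T = {y₁, y₂} := by
    obtain ⟨x, y, hxy, hball⟩ := hhyp.2
    have hm1 : y₁ ∈ fixedBall T := ⟨hn₁.le, μ₁, heig₁⟩
    have hm2 : y₂ ∈ fixedBall T := ⟨hn₂.le, μ₂, heig₂⟩
    rw [hball] at hm1 hm2 ⊢
    simp only [Set.mem_insert_iff, Set.mem_singleton_iff] at hm1 hm2
    rcases hm1 with h1 | h1 <;> rcases hm2 with h2 | h2
    · exact absurd (h1.trans h2.symm) hne
    · rw [← h1, ← h2]
    · rw [← h1, ← h2]; exact Set.pair_comm y₂ y₁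
    · exact absurd (h1.trans h2.symm) hne
  -- the two eigenvalues differ
  have hμne : μ₁ ≠ μ₂ := by
    intro h
    apply hhyp.1
    refine ⟨(2 : ℂ)⁻¹ • (y₁ + y₂), ?_, μ₁, ?_⟩
    · have habs : ‖(inner ℂ y₁ y₂ : ℂ)‖ ≤ 1 := by
        have := norm_inner_le_norm (𝕜 := ℂ) y₁ y₂
        rw [hn₁, hn₂] at this; simpa using this
      have hre : (inner ℂ y₁ y₂ : ℂ).re < 1 := by
        by_contra hre
        push_neg at hre
        have h1 : (inner ℂ y₁ y₂ : ℂ).re ≤ ‖(inner ℂ y₁ y₂ : ℂ)‖ := Complex.re_le_norm _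
        have h2 : (inner ℂ y₁ y₂ : ℂ).re = 1 := le_antisymm (h1.trans habs) hre
        have h3 : (inner ℂ y₁ y₂ : ℂ).im = 0 := by
          have h4 := Complex.sq_norm (inner ℂ y₁ y₂ : ℂ)
          rw [Complex.normSq_apply, h2] at h4
          nlinarith [sq_nonneg ((inner ℂ y₁ y₂ : ℂ).im)]
        have h5 : (inner ℂ y₁ y₂ : ℂ) = 1 := Complex.ext (by simpa using h2) (by simpa using h3)
        exact hne ((inner_eq_one_iff_of_norm_eq_one hn₁ hn₂).mp h5)
      have hsq : ‖y₁ + y₂‖^2 < 4 := by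
        have h6 := norm_add_sq (𝕜 := ℂ) y₁ y₂
        rw [hn₁, hn₂] at h6
        have h7 : RCLike.re (inner ℂ y₁ y₂ : ℂ) = (inner ℂ y₁ y₂ : ℂ).re := rfl
        rw [h7] at h6
        nlinarith [h6, hre]
      have hlt : ‖y₁ + y₂‖ < 2 := by nlinarith [norm_nonneg (y₁ + y₂)]
      rw [norm_smul]
      simp only [norm_inv, Complex.norm_ofNat]
      linarith [mul_lt_mul_of_pos_left hlt (by norm_num : (0:ℝ) < 2⁻¹)]
    · have hx : (((2 : ℂ)⁻¹ • (y₁ + y₂), 1) : H × ℂ)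
          = (2 : ℂ)⁻¹ • (((y₁,1) : H × ℂ) + ((y₂,1) : H × ℂ)) := by
        simp [Prod.ext_iff]; norm_num
      rw [hx, map_smul, map_add, heig₁, heig₂, ← h]
      module
  -- eigenvalues are nonzero
  have hμz : ∀ (y : H) (μ : ℂ), T (y,1) = μ • ((y,1) : H × ℂ) → μ ≠ 0 := by
    intro y μ heig h0
    have h1 : T (y,1) = T 0 := by rw [heig, h0, zero_smul, map_zero]
    have h2 : ((y,1) : H × ℂ) = 0 := hT.1.1 h1
    simpa [Prod.ext_iff] using h2
  have hμ₁0 : μ₁ ≠ 0 := hμz y₁ μ₁ heig₁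
  have hμ₂0 : μ₂ ≠ 0 := hμz y₂ μ₂ heig₂
  -- membership in M†
  have hdag : ∀ v : H × ℂ, v ∈ daggerA M ↔
      formA v ((y₁,1) : H × ℂ) = 0 ∧ formA v ((y₂,1) : H × ℂ) = 0 := by
    intro v; rw [hM]; exact mem_daggerA_pair
  -- T preserves M†
  have hTdag : ∀ v ∈ daggerA M, T v ∈ daggerA M := by
    intro v hv
    rw [hdag] at hv ⊢
    constructor
    · have : formA (T v) (T (y₁,1)) = formA v ((y₁,1) : H × ℂ) := hT.2 _ _
      rw [heig₁, formA_smul_right, hv.1] at this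
      have hμc : (starRingEnd ℂ) μ₁ ≠ 0 := by simpa using hμ₁0
      exact (mul_eq_zero.mp this).resolve_left hμc
    · have : formA (T v) (T (y₂,1)) = formA v ((y₂,1) : H × ℂ) := hT.2 _ _
      rw [heig₂, formA_smul_right, hv.2] at this
      have hμc : (starRingEnd ℂ) μ₂ ≠ 0 := by simpa using hμ₂0
      exact (mul_eq_zero.mp this).resolve_left hμc
  constructor
  · -- Part 1
    intro S hS hcomm
    have hSc : ∀ v, S (T v) = T (S v) := by
      intro v
      have := ContinuousLinearMap.ext_iff.mp hcomm v
      simpa using this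
    -- key: S preserves each eigenline
    have key : ∀ (a b : H) (μa μb : ℂ), fixedBall T = {a, b} →
        formA ((a,1) : H × ℂ) ((a,1) : H × ℂ) = 0 →
        T (a,1) = μa • ((a,1) : H × ℂ) → T (b,1) = μb • ((b,1) : H × ℂ) → μa ≠ μb →
        ∃ γ : ℂ, γ ≠ 0 ∧ S (a,1) = γ • ((a,1) : H × ℂ) := by
      intro a b μa μb hball hl ha hb hab
      set u := S ((a,1) : H × ℂ) with hu
      have hlu : formA u u = 0 := by rw [hu, hS.2]; exact hl
      have hu0 : u ≠ 0 := by
        intro h0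
        have h1 : S ((a,1) : H × ℂ) = S 0 := by rw [← hu, h0, map_zero]
        have h2 : ((a,1) : H × ℂ) = 0 := hS.1.1 h1
        simpa [Prod.ext_iff] using h2
      have hu2 : u.2 ≠ 0 := by
        intro h2
        apply hu0
        have h3 : u.1 = 0 := by
          have h4 := hlu
          rw [formA, h2] at h4
          simpa using h4
        exact Prod.ext h3 h2
      have heigu : T u = μa • u := by rw [hu, ← hSc, ha, map_smul, ← hu]
      have hnn : ‖u.1‖ = ‖u.2‖ := by
        have h3 : (inner ℂ u.1 u.1 : ℂ) = u.2 * (starRingEnd ℂ) u.2 := by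
          have := hlu; simp only [formA] at this; linear_combination this
        have h4 : (‖u.1‖ : ℝ)^2 = ‖u.2‖^2 := by
          have h5 := inner_self_eq_norm_sq (𝕜 := ℂ) u.1
          rw [h3] at h5
          have h6 : RCLike.re (u.2 * (starRingEnd ℂ) u.2) = ‖u.2‖^2 := by
            have h7 : RCLike.re (u.2 * (starRingEnd ℂ) u.2) = (u.2 * (starRingEnd ℂ) u.2).re := rfl
            rw [h7, Complex.mul_conj, Complex.ofReal_re, Complex.normSq_eq_norm_sq]
          rw [h6] at h5
          exact h5.symm
        have h6 : (‖u.1‖ - ‖u.2‖) * (‖u.1‖ + ‖u.2‖) = 0 := by ring_nf; linarith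
        rcases mul_eq_zero.mp h6 with h7 | h7
        · linarith
        · have := norm_nonneg u.1; have := norm_nonneg u.2
          have h8 : ‖u.2‖ = 0 := by linarith
          exact absurd (norm_eq_zero.mp h8) hu2
      set z := u.2⁻¹ • u.1 with hzdef
      have hz : ((z, 1) : H × ℂ) = u.2⁻¹ • u := by
        simp [hzdef, Prod.ext_iff, inv_mul_cancel₀ hu2]
      have heigz : T ((z,1) : H × ℂ) = μa • ((z,1) : H × ℂ) := by
        rw [hz, map_smul, heigu, smul_comm]
      have hzball : z ∈ fixedBall T := by
        refine ⟨?_, μa, heigz⟩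
        have habs : ‖u.2‖ ≠ 0 := norm_ne_zero_iff.mpr hu2
        rw [hzdef, norm_smul, norm_inv, hnn, inv_mul_cancel₀ habs]
      rw [hball] at hzball
      simp only [Set.mem_insert_iff, Set.mem_singleton_iff] at hzball
      rcases hzball with hza | hzb
      · refine ⟨u.2, hu2, ?_⟩
        have h9 : u.2 • ((z,1) : H × ℂ) = u := by
          rw [hz, smul_smul, mul_inv_cancel₀ hu2, one_smul]
        show u = u.2 • ((a,1) : H × ℂ)
        rw [← hza]
        exact h9.symm
      · exfalso
        rw [hzb] at heigz
        rw [hb] at heigz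
        have := congrArg Prod.snd heigz
        simp at this
        exact hab this.symm
    obtain ⟨α, hα0, hSv₁⟩ := key y₁ y₂ μ₁ μ₂ hfb hlight₁ heig₁ heig₂ hμne
    obtain ⟨β, hβ0, hSv₂⟩ := key y₂ y₁ μ₂ μ₁ (by rw [hfb]; exact Set.pair_comm y₁ y₂)
      hlight₂ heig₂ heig₁ hμne.symm
    have hαβ : α * (starRingEnd ℂ) β = 1 := by
      have h := hS.2 ((y₁,1) : H × ℂ) ((y₂,1) : H × ℂ)
      rw [hSv₁, hSv₂, formA_smul_left, formA_smul_right] at h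
      apply mul_right_cancel₀ hc
      rw [one_mul]; linear_combination h
    -- S maps M into M and onto M
    have hSM : ∀ m ∈ M, S m ∈ M := by
      intro m hm
      rw [hM, Submodule.mem_span_pair] at hm ⊢
      obtain ⟨p, q, rfl⟩ := hm
      refine ⟨p * α, q * β, ?_⟩
      rw [map_add, map_smul, map_smul, hSv₁, hSv₂, smul_smul, smul_smul]
    have hSMonto : ∀ m ∈ M, ∃ m' ∈ M, S m' = m := by
      intro m hm
      rw [hM, Submodule.mem_span_pair] at hm
      obtain ⟨p, q, rfl⟩ := hm
      refine ⟨(p/α) • ((y₁,1) : H × ℂ) + (q/β) • ((y₂,1) : H × ℂ), ?_, ?_⟩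
      · rw [hM, Submodule.mem_span_pair]; exact ⟨p/α, q/β, rfl⟩
      · rw [map_add, map_smul, map_smul, hSv₁, hSv₂, smul_smul, smul_smul,
          div_mul_cancel₀ _ hα0, div_mul_cancel₀ _ hβ0]
    have hSdag : ∀ v ∈ daggerA M, S v ∈ daggerA M := by
      intro v hv m hm
      obtain ⟨m', hm', rfl⟩ := hSMonto m hm
      rw [hS.2]
      exact hv m' hm'
    have hSdagpre : ∀ v : H × ℂ, S v ∈ daggerA M → v ∈ daggerA M := by
      intro v hv m hm
      have h := hv (S m) (hSM m hm)
      rw [hS.2] at h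
      exact h
    have himg : S '' (daggerA M : Set (H × ℂ)) = (daggerA M : Set (H × ℂ)) := by
      apply Set.Subset.antisymm
      · rintro _ ⟨v, hv, rfl⟩; exact hSdag v hv
      · intro w hw
        obtain ⟨v, rfl⟩ := hS.1.2 w
        exact ⟨v, hSdagpre v hw, rfl⟩
    refine ⟨⟨α, β, hSv₁, hSv₂, hαβ⟩, himg, ⟨fun v hv => hSdag v hv, hS.1.1.injOn,
      fun w hw => himg.symm ▸ hw⟩, fun u _ w _ => hS.2 u w, fun v _ => hSc v⟩
  · -- Part 2 : the converse construction
    intro α hα V hVbij hVA hVT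
    have hcα : (starRingEnd ℂ) α ≠ 0 := by simpa using hα
    set c := formA ((y₁,1) : H × ℂ) ((y₂,1) : H × ℂ) with hcdef
    have hcc : (starRingEnd ℂ) c ≠ 0 := by simpa using hc
    have hc21 : formA ((y₂,1) : H × ℂ) ((y₁,1) : H × ℂ) = (starRingEnd ℂ) c := by
      rw [hcdef, ← formA_conj]
    set φ₁ : (H × ℂ) →L[ℂ] ℂ := c⁻¹ • formACLM ((y₂,1) : H × ℂ) with hφ₁def
    set φ₂ : (H × ℂ) →L[ℂ] ℂ := ((starRingEnd ℂ) c)⁻¹ • formACLM ((y₁,1) : H × ℂ) with hφ₂def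
    have hφ₁app : ∀ v, φ₁ v = c⁻¹ * formA v ((y₂,1) : H × ℂ) := by
      intro v; rw [hφ₁def]; simp [formACLM_apply]
    have hφ₂app : ∀ v, φ₂ v = ((starRingEnd ℂ) c)⁻¹ * formA v ((y₁,1) : H × ℂ) := by
      intro v; rw [hφ₂def]; simp [formACLM_apply]
    have hφ₁₁ : φ₁ ((y₁,1) : H × ℂ) = 1 := by rw [hφ₁app, ← hcdef, inv_mul_cancel₀ hc]
    have hφ₁₂ : φ₁ ((y₂,1) : H × ℂ) = 0 := by rw [hφ₁app, hlight₂, mul_zero]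
    have hφ₂₁ : φ₂ ((y₁,1) : H × ℂ) = 0 := by rw [hφ₂app, hlight₁, mul_zero]
    have hφ₂₂ : φ₂ ((y₂,1) : H × ℂ) = 1 := by rw [hφ₂app, hc21, inv_mul_cancel₀ hcc]
    have hφdag : ∀ w ∈ daggerA M, φ₁ w = 0 ∧ φ₂ w = 0 := by
      intro w hw
      rw [hdag] at hw
      exact ⟨by rw [hφ₁app, hw.2, mul_zero], by rw [hφ₂app, hw.1, mul_zero]⟩
    have hres : ∀ v : H × ℂ,
        v - (φ₁ v • ((y₁,1):H × ℂ) + φ₂ v • ((y₂,1):H × ℂ)) ∈ daggerA M := by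
      intro v
      rw [hdag]
      constructor
      · rw [formA_sub_left, formA_add_left, formA_smul_left, formA_smul_left,
          hlight₁, hc21, hφ₂app]
        field_simp
        ring
      · rw [formA_sub_left, formA_add_left, formA_smul_left, formA_smul_left,
          hlight₂, ← hcdef, hφ₁app]
        field_simp
        ring
    set P : (H × ℂ) →L[ℂ] (H × ℂ) :=
      φ₁.smulRight ((y₁,1):H × ℂ) + φ₂.smulRight ((y₂,1):H × ℂ) with hPdef
    have hPapp : ∀ v, P v = φ₁ v • ((y₁,1):H × ℂ) + φ₂ v • ((y₂,1):H × ℂ) := by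
      intro v; rw [hPdef]; simp
    set W : (H × ℂ) →L[ℂ] daggerA M :=
      (ContinuousLinearMap.id ℂ (H × ℂ) - P).codRestrict (daggerA M)
        (fun v => by
          rw [ContinuousLinearMap.sub_apply, ContinuousLinearMap.id_apply, hPapp]
          exact hres v) with hWdef
    have hWapp : ∀ v, (W v : H × ℂ)
        = v - (φ₁ v • ((y₁,1):H × ℂ) + φ₂ v • ((y₂,1):H × ℂ)) := by
      intro v
      rw [hWdef, ContinuousLinearMap.coe_codRestrict_apply,
        ContinuousLinearMap.sub_apply, ContinuousLinearMap.id_apply, hPapp]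
    have hdecomp : ∀ v : H × ℂ,
        v = φ₁ v • ((y₁,1):H × ℂ) + φ₂ v • ((y₂,1):H × ℂ) + (W v : H × ℂ) := by
      intro v; rw [hWapp]; abel
    have hWv₁ : W ((y₁,1) : H × ℂ) = 0 := by
      apply Subtype.ext
      rw [hWapp, hφ₁₁, hφ₂₁]
      simp
    have hWv₂ : W ((y₂,1) : H × ℂ) = 0 := by
      apply Subtype.ext
      rw [hWapp, hφ₁₂, hφ₂₂]
      simp
    have hWdagger : ∀ w : daggerA M, W (w : H × ℂ) = w := by
      intro w
      apply Subtype.ext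
      rw [hWapp, (hφdag w w.2).1, (hφdag w w.2).2]
      simp
    set S : (H × ℂ) →L[ℂ] (H × ℂ) :=
      (α • φ₁).smulRight ((y₁,1):H × ℂ)
        + ((1 / (starRingEnd ℂ) α) • φ₂).smulRight ((y₂,1):H × ℂ)
        + (daggerA M).subtypeL.comp (V.comp W) with hSdef
    have hSapp : ∀ v, S v = (α * φ₁ v) • ((y₁,1):H × ℂ)
        + ((1 / (starRingEnd ℂ) α) * φ₂ v) • ((y₂,1):H × ℂ) + (V (W v) : H × ℂ) := by
      intro v; rw [hSdef]; simp
    have hSform : ∀ (p q : ℂ) (w : daggerA M),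
        S (p • ((y₁,1):H × ℂ) + q • ((y₂,1):H × ℂ) + (w : H × ℂ))
          = (α * p) • ((y₁,1):H × ℂ) + ((1 / (starRingEnd ℂ) α) * q) • ((y₂,1):H × ℂ)
            + (V w : H × ℂ) := by
      intro p q w
      have e₁ : φ₁ (p • ((y₁,1):H × ℂ) + q • ((y₂,1):H × ℂ) + (w : H × ℂ)) = p := by
        rw [map_add, map_add, map_smul, map_smul, hφ₁₁, hφ₁₂, (hφdag w w.2).1]
        simp
      have e₂ : φ₂ (p • ((y₁,1):H × ℂ) + q • ((y₂,1):H × ℂ) + (w : H × ℂ)) = q := by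
        rw [map_add, map_add, map_smul, map_smul, hφ₂₁, hφ₂₂, (hφdag w w.2).2]
        simp
      have eW : W (p • ((y₁,1):H × ℂ) + q • ((y₂,1):H × ℂ) + (w : H × ℂ)) = w := by
        apply Subtype.ext
        rw [hWapp, e₁, e₂]
        abel
      rw [hSapp, e₁, e₂, eW]
    have huniq : ∀ (p q : ℂ) (w : H × ℂ), w ∈ daggerA M →
        p • ((y₁,1):H × ℂ) + q • ((y₂,1):H × ℂ) + w = 0 → p = 0 ∧ q = 0 ∧ w = 0 := by
      intro p q w hw h
      rw [hdag] at hw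
      have h2 : formA (p • ((y₁,1):H × ℂ) + q • ((y₂,1):H × ℂ) + w) ((y₂,1):H × ℂ) = 0 := by
        rw [h]; simp [formA]
      rw [formA_add_left, formA_add_left, formA_smul_left, formA_smul_left,
        hlight₂, hw.2, ← hcdef] at h2
      have hp : p = 0 := by
        have h5 : p * c = 0 := by linear_combination h2
        exact (mul_eq_zero.mp h5).resolve_right hc
      have h3 : formA (p • ((y₁,1):H × ℂ) + q • ((y₂,1):H × ℂ) + w) ((y₁,1):H × ℂ) = 0 := by
        rw [h]; simp [formA]
      rw [formA_add_left, formA_add_left, formA_smul_left, formA_smul_left,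
        hlight₁, hw.1, hc21] at h3
      have hq : q = 0 := by
        have h5 : q * (starRingEnd ℂ) c = 0 := by linear_combination h3
        exact (mul_eq_zero.mp h5).resolve_right hcc
      refine ⟨hp, hq, ?_⟩
      rw [hp, hq] at h
      simpa using h
    have hSv₁ : S ((y₁,1):H × ℂ) = α • ((y₁,1):H × ℂ) := by
      rw [hSapp, hφ₁₁, hφ₂₁, hWv₁, map_zero]
      simp
    have hSv₂ : S ((y₂,1):H × ℂ) = (1 / (starRingEnd ℂ) α) • ((y₂,1):H × ℂ) := by
      rw [hSapp, hφ₁₂, hφ₂₂, hWv₂, map_zero]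
      simp
    have hSw : ∀ w : daggerA M, S (w : H × ℂ) = (V w : H × ℂ) := by
      intro w
      rw [hSapp, (hφdag w w.2).1, (hφdag w w.2).2, hWdagger]
      simp
    have hdagA : ∀ w : daggerA M,
        formA (w : H × ℂ) ((y₁,1):H × ℂ) = 0 ∧ formA (w : H × ℂ) ((y₂,1):H × ℂ) = 0 :=
      fun w => (hdag _).mp w.2
    have hconjα : (starRingEnd ℂ) (1 / (starRingEnd ℂ) α) = 1 / α := by
      rw [map_div₀, map_one]
      simp
    have hSA : ∀ u v : H × ℂ, formA (S u) (S v) = formA u v := by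
      intro u v
      conv_rhs => rw [hdecomp u, hdecomp v]
      rw [hSapp u, hSapp v]
      rw [formA_expand _ _ hlight₁ hlight₂ _ _ _ _ _ _
          (hdagA (V (W u))).1 (hdagA (V (W u))).2 (hdagA (V (W v))).1 (hdagA (V (W v))).2,
        formA_expand _ _ hlight₁ hlight₂ _ _ _ _ _ _
          (hdagA (W u)).1 (hdagA (W u)).2 (hdagA (W v)).1 (hdagA (W v)).2,
        hVA (W u) (W v)]
      have scalar : ∀ a b a' b' X c₁ c₂ : ℂ,
          (α * a) * (starRingEnd ℂ) ((1 / (starRingEnd ℂ) α) * b') * c₁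
            + ((1 / (starRingEnd ℂ) α) * b) * (starRingEnd ℂ) (α * a') * c₂ + X
          = a * (starRingEnd ℂ) b' * c₁ + b * (starRingEnd ℂ) a' * c₂ + X := by
        intro a b a' b' X c₁ c₂
        simp only [map_mul, map_div₀, map_one, Complex.conj_conj]
        field_simp
      exact scalar _ _ _ _ _ _ _
    have hSinj : Function.Injective S := by
      have h0 : ∀ w, S w = 0 → w = 0 := by
        intro w hw
        rw [hSapp] at hw
        obtain ⟨hp, hq, hwz⟩ := huniq _ _ _ (V (W w)).2 hw
        have hφ1 : φ₁ w = 0 := by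
          rcases mul_eq_zero.mp hp with h | h
          · exact absurd h hα
          · exact h
        have hφ2 : φ₂ w = 0 := by
          rcases mul_eq_zero.mp hq with h | h
          · exact absurd h (by simpa [one_div] using inv_ne_zero hcα)
          · exact h
        have hWz : W w = 0 := by
          apply hVbij.1
          rw [map_zero]
          exact Subtype.ext (by simpa using hwz)
        rw [hdecomp w, hφ1, hφ2, hWz]
        simp
      intro a b hab
      have h1 : S (a - b) = 0 := by rw [map_sub, hab, sub_self]
      exact sub_eq_zero.mp (h0 _ h1)
    have hSsurj : Function.Surjective S := by
      intro u
      obtain ⟨w, hw⟩ := hVbij.2 (W u)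
      refine ⟨(φ₁ u / α) • ((y₁,1):H × ℂ) + ((starRingEnd ℂ) α * φ₂ u) • ((y₂,1):H × ℂ)
        + (w : H × ℂ), ?_⟩
      rw [hSform, hw,
        show α * (φ₁ u / α) = φ₁ u by field_simp,
        show (1 / (starRingEnd ℂ) α) * ((starRingEnd ℂ) α * φ₂ u) = φ₂ u by field_simp]
      exact (hdecomp u).symm
    have hTφ : ∀ v : H × ℂ, T v = (φ₁ v * μ₁) • ((y₁,1):H × ℂ)
        + (φ₂ v * μ₂) • ((y₂,1):H × ℂ) + T (W v : H × ℂ) := by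
      intro v
      conv_lhs => rw [hdecomp v]
      rw [map_add, map_add, map_smul, map_smul, heig₁, heig₂, smul_smul, smul_smul]
    have hScomm : S ∘L T = T ∘L S := by
      apply ContinuousLinearMap.ext
      intro v
      simp only [ContinuousLinearMap.comp_apply]
      have hTV : T ((V (W v) : H × ℂ)) = (V ⟨T (W v : H × ℂ), hTdag _ (W v).2⟩ : H × ℂ) :=
        hVT (W v) ⟨T (W v : H × ℂ), hTdag _ (W v).2⟩ rfl
      have hstep : S (T v) = (α * (φ₁ v * μ₁)) • ((y₁,1):H × ℂ)
          + ((1 / (starRingEnd ℂ) α) * (φ₂ v * μ₂)) • ((y₂,1):H × ℂ)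
          + (V ⟨T (W v : H × ℂ), hTdag _ (W v).2⟩ : H × ℂ) := by
        rw [hTφ v]
        exact hSform (φ₁ v * μ₁) (φ₂ v * μ₂) ⟨T (W v : H × ℂ), hTdag _ (W v).2⟩
      rw [hstep, hSapp v, map_add, map_add, map_smul, map_smul, heig₁, heig₂, hTV,
        smul_smul, smul_smul]
      module
    exact ⟨S, ⟨⟨hSinj, hSsurj⟩, hSA⟩, hScomm, hSv₁, hSv₂, hSw⟩

end
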